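/- arXiv:2504.16678 — 4 statements merged into one kernel-verified Lean document; each statement's English description precedes it below -/
import Mathlib

section
/- Let K and L be convex bodies (nonempty compact convex sets) in R^n that cannot be separated by a hyperplane. If (K_i) and (L_i) are sequences of convex bodies with K_i → K and L_i → L in the Hausdorff metric, then K_i ∩ L_i is nonempty for all sufficiently large i, and K_i ∩ L_i → K ∩ L in the Hausdorff metric. -/
open Metric Filter Pointwise RealInnerProductSpace

section Aux

variable {E : Type*} [NormedAddCommGroup E] [InnerProductSpace ℝ E] [FiniteDimensional ℝ E]

/-- Separation of a point from a closed convex set via the metric projection. -/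
lemma aux_sep_point {C : Set E} (hconv : Convex ℝ C) (hcl : IsClosed C)
    (hne : C.Nonempty) {z : E} (hz : z ∉ C) :
    ∃ u p, ‖u‖ = 1 ∧ p ∈ C ∧ (∀ y ∈ C, ⟪u, y⟫ ≤ ⟪u, p⟫) ∧ ⟪u, p⟫ < ⟪u, z⟫ := by
  haveI : CompleteSpace E := FiniteDimensional.complete ℝ E
  obtain ⟨p, hpC, hproj⟩ := exists_norm_eq_iInf_of_complete_convex hne hcl.isComplete hconv z
  have hchar : ∀ w ∈ C, ⟪z - p, w - p⟫ ≤ 0 :=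
    (norm_eq_iInf_iff_real_inner_le_zero hconv hpC).1 hproj
  have hvne : z - p ≠ 0 := sub_ne_zero.2 fun h => hz (h ▸ hpC)
  have hvpos : (0:ℝ) < ‖z - p‖ := norm_pos_iff.2 hvne
  refine ⟨‖z - p‖⁻¹ • (z - p), p, ?_, hpC, ?_, ?_⟩
  · simp [norm_smul, abs_of_nonneg, inv_mul_cancel₀ hvpos.ne']
  · intro y hy
    have h1 : ⟪z - p, y - p⟫ ≤ 0 := hchar y hy
    have h2 : ⟪‖z - p‖⁻¹ • (z - p), y - p⟫ ≤ 0 := by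
      rw [real_inner_smul_left]
      exact mul_nonpos_of_nonneg_of_nonpos (by positivity) h1
    rw [inner_sub_right] at h2
    linarith
  · have h2 : ⟪‖z - p‖⁻¹ • (z - p), z - p⟫ = ‖z - p‖ := by
      rw [real_inner_smul_left, real_inner_self_eq_norm_sq]
      field_simp
    have h3 : ⟪‖z - p‖⁻¹ • (z - p), z⟫ - ⟪‖z - p‖⁻¹ • (z - p), p⟫ = ‖z - p‖ := by
      rw [← inner_sub_right, h2]
    linarith

/-- If a compact convex nonempty set contains no closed ball around the origin,
then some unit vector has nonpositive inner product with every element. -/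
lemma aux_ball_of_no_sep {C : Set E} (hconv : Convex ℝ C) (hcomp : IsCompact C)
    (hne : C.Nonempty) (h : ∀ r : ℝ, 0 < r → ¬ closedBall (0:E) r ⊆ C) :
    ∃ u : E, ‖u‖ = 1 ∧ ∀ y ∈ C, ⟪u, y⟫ ≤ 0 := by
  have hz : ∀ j : ℕ, ∃ z : E, ‖z‖ ≤ 1/(j+1) ∧ z ∉ C := by
    intro j
    rcases Set.not_subset.1 (h (1/(j+1)) (by positivity)) with ⟨z, hz1, hz2⟩
    exact ⟨z, by simpa [dist_eq_norm] using hz1, hz2⟩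
  choose z hz1 hz2 using hz
  have hsep : ∀ j : ℕ, ∃ u : E, ‖u‖ = 1 ∧ ∀ y ∈ C, ⟪u, y⟫ ≤ 1/(j+1) := by
    intro j
    obtain ⟨u, p, hu1, _, hle, hlt⟩ := aux_sep_point hconv hcomp.isClosed hne (hz2 j)
    refine ⟨u, hu1, fun y hy => ?_⟩
    have h1 := hle y hy
    have h2 : ⟪u, z j⟫ ≤ 1/(j+1) := by
      calc ⟪u, z j⟫ ≤ ‖u‖ * ‖z j‖ := real_inner_le_norm u (z j)
        _ ≤ 1/(j+1) := by rw [hu1, one_mul]; exact hz1 j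
    linarith
  choose u hu1 hu2 using hsep
  have husphere : ∀ j, u j ∈ sphere (0:E) 1 := fun j => by simp [hu1 j]
  obtain ⟨v, hv, φ, hφ, hconv'⟩ := (isCompact_sphere (0:E) 1).tendsto_subseq husphere
  refine ⟨v, by simpa using hv, fun y hy => ?_⟩
  have hv1 : Tendsto (fun j => ⟪u (φ j), y⟫) atTop (nhds ⟪v, y⟫) :=
    hconv'.inner tendsto_const_nhds
  have hv2 : Tendsto (fun j : ℕ => 1/((φ j : ℝ)+1)) atTop (nhds 0) :=
    tendsto_one_div_add_atTop_nhds_zero_nat.comp hφ.tendsto_atTop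
  exact le_of_tendsto_of_tendsto' hv1 hv2 (fun j => hu2 (φ j) y hy)

/-- If every point of a ball is `δ`-close to a closed convex set, then the
`δ`-shrunk ball is contained in the set. -/
lemma aux_shrink {C : Set E} (hconv : Convex ℝ C) (hcl : IsClosed C)
    {ρ δ : ℝ} (hρ : 0 ≤ ρ) (hδ : 0 ≤ δ)
    (h : ∀ z ∈ closedBall (0:E) ρ, ∃ y ∈ C, dist z y ≤ δ) :
    closedBall (0:E) (ρ - δ) ⊆ C := by
  have hne : C.Nonempty := by
    obtain ⟨y, hy, -⟩ := h 0 (mem_closedBall_self hρ); exact ⟨y, hy⟩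
  intro x hx
  by_contra hxC
  obtain ⟨u, p, hu1, hpC, hle, hlt⟩ := aux_sep_point hconv hcl hne hxC
  have hxn : ‖x‖ ≤ ρ - δ := by simpa [dist_eq_norm] using hx
  have hwball : x + δ • u ∈ closedBall (0:E) ρ := by
    have h1 : ‖x + δ • u‖ ≤ ‖x‖ + δ * ‖u‖ := by
      calc ‖x + δ • u‖ ≤ ‖x‖ + ‖δ • u‖ := norm_add_le _ _
        _ = ‖x‖ + δ * ‖u‖ := by rw [norm_smul, Real.norm_of_nonneg hδ]
    rw [hu1] at h1
    simp only [mem_closedBall, dist_zero_right]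
    linarith
  obtain ⟨m, hmC, hm⟩ := h (x + δ • u) hwball
  have h1 : ⟪u, m⟫ ≤ ⟪u, p⟫ := hle m hmC
  have h2 : ⟪u, x + δ • u⟫ = ⟪u, x⟫ + δ := by
    rw [inner_add_right, real_inner_smul_right, real_inner_self_eq_norm_sq, hu1]
    ring
  have h3 : ⟪u, x + δ • u⟫ - ⟪u, m⟫ ≤ δ := by
    calc ⟪u, x + δ • u⟫ - ⟪u, m⟫ = ⟪u, (x + δ • u) - m⟫ := (inner_sub_right _ _ _).symm
      _ ≤ ‖u‖ * ‖(x + δ • u) - m‖ := real_inner_le_norm _ _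
      _ ≤ δ := by rw [hu1, one_mul]; simpa [dist_eq_norm] using hm
  linarith

/-- If `K - L` contains a ball of radius `ρ`, then from any `x ∈ K`, `y ∈ L` we can find a
common point of `K` and `L` at distance at most `(2R/ρ) * dist x y` from `x`. -/
lemma aux_common_point {K L : Set E} (hKconv : Convex ℝ K) (hLconv : Convex ℝ L)
    {ρ R : ℝ} (hρ : 0 < ρ)
    (hsub : ∀ z ∈ closedBall (0:E) ρ, ∃ k ∈ K, ∃ l ∈ L, k - l = z)
    (hKR : ∀ k ∈ K, ‖k‖ ≤ R)
    {x y : E} (hx : x ∈ K) (hy : y ∈ L) :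
    ∃ w ∈ K ∩ L, dist w x ≤ 2 * R / ρ * dist x y := by
  have hR : (0:ℝ) ≤ R := (norm_nonneg x).trans (hKR x hx)
  rcases eq_or_ne x y with rfl | hne
  · exact ⟨x, ⟨hx, hy⟩, by simp⟩
  · have hdpos : 0 < dist x y := dist_pos.2 hne
    set d := dist x y with hd
    have hzball : (ρ / d) • (y - x) ∈ closedBall (0:E) ρ := by
      simp only [mem_closedBall, dist_zero_right, norm_smul]
      rw [Real.norm_of_nonneg (by positivity), show ‖y - x‖ = d from by
        rw [hd, dist_eq_norm']]
      field_simp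
      exact le_rfl
    obtain ⟨a, ha, b, hb, hab⟩ := hsub _ hzball
    set t := d / (d + ρ) with ht
    have ht0 : 0 ≤ t := by positivity
    have ht1 : t ≤ 1 := by rw [ht, div_le_one (by positivity)]; linarith
    have hmemK : (1-t) • x + t • a ∈ K := hKconv hx ha (by linarith) ht0 (by ring)
    have key : (1-t) • x + t • a = (1-t) • y + t • b := by
      have h1 : a = b + (ρ / d) • (y - x) := sub_eq_iff_eq_add'.1 hab
      rw [h1]
      match_scalars
      all_goals try rw [ht]
      all_goals field_simp
      all_goals ring
    have hmemL : (1-t) • x + t • a ∈ L := by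
      rw [key]; exact hLconv hy hb (by linarith) ht0 (by ring)
    refine ⟨(1-t) • x + t • a, ⟨hmemK, hmemL⟩, ?_⟩
    have hdist : dist ((1-t) • x + t • a) x = t * ‖a - x‖ := by
      rw [dist_eq_norm, show (1-t) • x + t • a - x = t • (a - x) from by module,
        norm_smul, Real.norm_of_nonneg ht0]
    rw [hdist]
    have hax : ‖a - x‖ ≤ 2 * R := by
      calc ‖a - x‖ ≤ ‖a‖ + ‖x‖ := norm_sub_le _ _
        _ ≤ 2*R := by linarith [hKR a ha, hKR x hx]
    calc t * ‖a - x‖ ≤ t * (2*R) := mul_le_mul_of_nonneg_left hax ht0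
      _ = 2*R*d/(d+ρ) := by rw [ht]; ring
      _ ≤ 2*R*d/ρ := by gcongr; linarith
      _ = 2*R/ρ*d := by ring

/-- Pointwise approximation from a Hausdorff distance bound. -/
lemma aux_approx {s t : Set E} (hs : s.Nonempty) (hsb : Bornology.IsBounded s)
    (ht : IsCompact t) (htne : t.Nonempty) {ε : ℝ} (h : hausdorffDist s t ≤ ε) :
    ∀ x ∈ s, ∃ y ∈ t, dist x y ≤ ε := by
  intro x hx
  have hfin : EMetric.hausdorffEdist s t ≠ ⊤ :=
    hausdorffEdist_ne_top_of_nonempty_of_bounded hs htne hsb ht.isBounded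
  have h1 : infDist x t ≤ ε := (infDist_le_hausdorffDist_of_mem hx hfin).trans h
  obtain ⟨y, hy, hxy⟩ := ht.exists_infDist_eq_dist htne x
  exact ⟨y, hy, by rw [← hxy]; exact h1⟩

lemma aux_compact_sub {s t : Set E} (hs : IsCompact s) (ht : IsCompact t) :
    IsCompact (s - t) := by
  have h : s - t = (fun p : E × E => p.1 - p.2) '' (s ×ˢ t) := by
    ext x
    simp only [Set.mem_sub, Set.mem_image, Set.mem_prod, Prod.exists]
    constructor
    · rintro ⟨a, ha, b, hb, rfl⟩; exact ⟨a, b, ⟨ha, hb⟩, rfl⟩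
    · rintro ⟨a, b, ⟨ha, hb⟩, rfl⟩; exact ⟨a, ha, b, hb, rfl⟩
  rw [h]
  exact (hs.prod ht).image (continuous_fst.sub continuous_snd)

/-- The main quantitative stability lemma. -/
lemma aux_quant {K L K' L' : Set E}
    (hK : Convex ℝ K) (hL : Convex ℝ L) (hK' : Convex ℝ K') (hL' : Convex ℝ L')
    (hK'c : IsCompact K') (hL'c : IsCompact L')
    {ρ R ε : ℝ} (hρ : 0 < ρ) (hε : 0 ≤ ε) (hερ : ε ≤ ρ / 4)
    (hsub : ∀ z ∈ closedBall (0:E) ρ, ∃ k ∈ K, ∃ l ∈ L, k - l = z)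
    (hKR : ∀ k ∈ K, ‖k‖ ≤ R)
    (hK'R : ∀ k ∈ K', ‖k‖ ≤ R)
    (hKK' : ∀ x ∈ K, ∃ x' ∈ K', dist x x' ≤ ε)
    (hK'K : ∀ x' ∈ K', ∃ x ∈ K, dist x' x ≤ ε)
    (hLL' : ∀ y ∈ L, ∃ y' ∈ L', dist y y' ≤ ε)
    (hL'L : ∀ y' ∈ L', ∃ y ∈ L, dist y' y ≤ ε) :
    (K' ∩ L').Nonempty ∧ hausdorffDist (K' ∩ L') (K ∩ L) ≤ (1 + 8 * R / ρ) * ε := by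
  have hR : (0:ℝ) ≤ R := by
    obtain ⟨k, hk, -⟩ := hsub 0 (mem_closedBall_self hρ.le)
    exact (norm_nonneg k).trans (hKR k hk)
  -- the shrunk ball is in K' - L'
  have hsub' : ∀ z ∈ closedBall (0:E) (ρ/2), ∃ k ∈ K', ∃ l ∈ L', k - l = z := by
    have hC'conv : Convex ℝ (K' - L') := hK'.sub hL'
    have hC'cl : IsClosed (K' - L') := (aux_compact_sub hK'c hL'c).isClosed
    have happrox : ∀ z ∈ closedBall (0:E) ρ, ∃ y ∈ K' - L', dist z y ≤ 2*ε := by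
      intro z hz
      obtain ⟨k, hk, l, hl, rfl⟩ := hsub z hz
      obtain ⟨k', hk', hkk'⟩ := hKK' k hk
      obtain ⟨l', hl', hll'⟩ := hLL' l hl
      refine ⟨k' - l', Set.sub_mem_sub hk' hl', ?_⟩
      calc dist (k - l) (k' - l') = ‖(k - k') - (l - l')‖ := by
            rw [dist_eq_norm]; congr 1; abel
        _ ≤ ‖k - k'‖ + ‖l - l'‖ := norm_sub_le _ _
        _ ≤ 2*ε := by
            rw [← dist_eq_norm, ← dist_eq_norm]; linarith
    have hshrink := aux_shrink hC'conv hC'cl hρ.le (by linarith) happrox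
    intro z hz
    have hz' : z ∈ closedBall (0:E) (ρ - 2*ε) := by
      simp only [mem_closedBall, dist_zero_right] at hz ⊢
      linarith
    exact Set.mem_sub.1 (hshrink hz')
  have hρ2 : (0:ℝ) < ρ/2 := by linarith
  -- direction 1 : points of K ∩ L are close to K' ∩ L'
  have dir1 : ∀ x ∈ K ∩ L, ∃ w ∈ K' ∩ L', dist x w ≤ (1 + 8 * R / ρ) * ε := by
    rintro x ⟨hxK, hxL⟩
    obtain ⟨x', hx', hxx'⟩ := hKK' x hxK
    obtain ⟨y', hy', hyy'⟩ := hLL' x hxL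
    obtain ⟨w, hw, hwd⟩ := aux_common_point hK' hL' hρ2 hsub' hK'R hx' hy'
    have hxy' : dist x' y' ≤ 2*ε := by
      calc dist x' y' ≤ dist x x' + dist x y' := dist_triangle_left _ _ _
        _ ≤ 2*ε := by linarith
    have hwd' : dist w x' ≤ 8*R/ρ*ε := by
      calc dist w x' ≤ 2*R/(ρ/2) * dist x' y' := hwd
        _ ≤ 2*R/(ρ/2) * (2*ε) := by gcongr
        _ = 8*R/ρ*ε := by field_simp; ring
    refine ⟨w, hw, ?_⟩
    calc dist x w ≤ dist x x' + dist x' w := dist_triangle _ _ _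
      _ ≤ ε + 8*R/ρ*ε := by rw [dist_comm x' w]; linarith
      _ = (1 + 8*R/ρ) * ε := by ring
  -- K ∩ L is nonempty
  have hKLne : (K ∩ L).Nonempty := by
    obtain ⟨k, hk, l, hl, hkl⟩ := hsub 0 (mem_closedBall_self hρ.le)
    have : k = l := by rwa [sub_eq_zero] at hkl
    exact ⟨k, hk, this ▸ hl⟩
  -- direction 2 : points of K' ∩ L' are close to K ∩ L
  have dir2 : ∀ w ∈ K' ∩ L', ∃ x ∈ K ∩ L, dist w x ≤ (1 + 8 * R / ρ) * ε := by
    rintro w ⟨hwK', hwL'⟩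
    obtain ⟨x, hx, hwx⟩ := hK'K w hwK'
    obtain ⟨y, hy, hwy⟩ := hL'L w hwL'
    obtain ⟨z, hz, hzd⟩ := aux_common_point hK hL hρ hsub hKR hx hy
    have hxy : dist x y ≤ 2*ε := by
      calc dist x y ≤ dist x w + dist w y := dist_triangle _ _ _
        _ ≤ 2*ε := by rw [dist_comm x w]; linarith
    have hzd' : dist z x ≤ 4*R/ρ*ε := by
      calc dist z x ≤ 2*R/ρ * dist x y := hzd
        _ ≤ 2*R/ρ * (2*ε) := by gcongr
        _ = 4*R/ρ*ε := by ring
    refine ⟨z, hz, ?_⟩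
    have h48 : 4*R/ρ*ε ≤ 8*R/ρ*ε := by
      have : 4*R/ρ ≤ 8*R/ρ := by gcongr <;> linarith
      exact mul_le_mul_of_nonneg_right this hε
    calc dist w z ≤ dist w x + dist x z := dist_triangle _ _ _
      _ ≤ ε + 4*R/ρ*ε := by rw [dist_comm x z]; linarith
      _ ≤ (1 + 8*R/ρ) * ε := by nlinarith
  obtain ⟨x0, hx0⟩ := hKLne
  obtain ⟨w0, hw0, -⟩ := dir1 x0 hx0
  refine ⟨⟨w0, hw0⟩, ?_⟩
  apply hausdorffDist_le_of_mem_dist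
  · positivity
  · exact dir2
  · intro x hx
    obtain ⟨w, hw, hd⟩ := dir1 x hx
    exact ⟨w, hw, hd⟩

end Aux

/-- If convex bodies `K, L` in `ℝⁿ` cannot be separated by a hyperplane and
`Kᵢ → K`, `Lᵢ → L` in the Hausdorff metric, then `Kᵢ ∩ Lᵢ` is nonempty for all large `i`
and `Kᵢ ∩ Lᵢ → K ∩ L` in the Hausdorff metric. -/
theorem convergence_of_intersections {n : ℕ}
    (K L : ConvexBody (EuclideanSpace ℝ (Fin n)))
    (hsep : ¬ ∃ (f : EuclideanSpace ℝ (Fin n) →ₗ[ℝ] ℝ) (α : ℝ), f ≠ 0 ∧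
      (∀ x ∈ (K : Set (EuclideanSpace ℝ (Fin n))), f x ≤ α) ∧
      (∀ x ∈ (L : Set (EuclideanSpace ℝ (Fin n))), α ≤ f x))
    (Ki Li : ℕ → ConvexBody (EuclideanSpace ℝ (Fin n)))
    (hK : Tendsto Ki atTop (nhds K)) (hL : Tendsto Li atTop (nhds L)) :
    (∀ᶠ i in atTop, ((Ki i : Set (EuclideanSpace ℝ (Fin n))) ∩
        (Li i : Set (EuclideanSpace ℝ (Fin n)))).Nonempty) ∧
    Tendsto (fun i => hausdorffDist
        ((Ki i : Set (EuclideanSpace ℝ (Fin n))) ∩ (Li i : Set (EuclideanSpace ℝ (Fin n))))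
        ((K : Set (EuclideanSpace ℝ (Fin n))) ∩ (L : Set (EuclideanSpace ℝ (Fin n)))))
      atTop (nhds 0) := by
  set E := EuclideanSpace ℝ (Fin n) with hE
  -- Step 1 : a ball around the origin inside K - L
  have hMconv : Convex ℝ ((K : Set E) - (L : Set E)) := K.convex.sub L.convex
  have hMcomp : IsCompact ((K : Set E) - (L : Set E)) :=
    aux_compact_sub K.isCompact L.isCompact
  have hMne : ((K : Set E) - (L : Set E)).Nonempty := by
    obtain ⟨k, hk⟩ := K.nonempty
    obtain ⟨l, hl⟩ := L.nonempty
    exact ⟨k - l, Set.sub_mem_sub hk hl⟩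
  obtain ⟨ρ, hρ, hball⟩ : ∃ ρ : ℝ, 0 < ρ ∧
      closedBall (0:E) ρ ⊆ (K : Set E) - (L : Set E) := by
    by_contra hcon
    push_neg at hcon
    obtain ⟨u, hu1, hu2⟩ := aux_ball_of_no_sep hMconv hMcomp hMne
      (fun r hr => hcon r hr)
    have hu2' : ∀ k ∈ (K : Set E), ∀ l ∈ (L : Set E), ⟪u, k⟫ ≤ ⟪u, l⟫ := by
      intro k hk l hl
      have := hu2 (k - l) (Set.sub_mem_sub hk hl)
      rw [inner_sub_right] at this
      linarith
    refine hsep ⟨{ toFun := fun x => ⟪u, x⟫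
                   map_add' := fun x y => inner_add_right u x y
                   map_smul' := fun c x => by simp [real_inner_smul_right] },
      sSup ((fun x => ⟪u, x⟫) '' (K : Set E)), ?_, ?_, ?_⟩
    · intro h0
      have h1 : ⟪u, u⟫ = (0:ℝ) := by
        have := congrArg (fun g : E →ₗ[ℝ] ℝ => g u) h0
        simpa using this
      rw [real_inner_self_eq_norm_sq, hu1] at h1
      norm_num at h1
    · intro x hx
      exact le_csSup ((K.isCompact.image
        (Continuous.inner continuous_const continuous_id)).bddAbove)
        (Set.mem_image_of_mem _ hx)
    · intro y hy
      apply csSup_le (K.nonempty.image _)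
      rintro a ⟨k, hk, rfl⟩
      exact hu2' k hk y hy
  -- Step 2 : uniform bound
  obtain ⟨rK, hrK⟩ := K.isBounded.subset_closedBall (0:E)
  obtain ⟨rL, hrL⟩ := L.isBounded.subset_closedBall (0:E)
  set R : ℝ := max rK rL + 1 with hR
  have hKR : ∀ k ∈ (K : Set E), ‖k‖ ≤ R := by
    intro k hk
    have := hrK hk
    simp only [mem_closedBall, dist_zero_right] at this
    have h1 : rK ≤ max rK rL := le_max_left _ _
    rw [hR]; linarith
  have hLR : ∀ l ∈ (L : Set E), ‖l‖ ≤ R := by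
    intro l hl
    have := hrL hl
    simp only [mem_closedBall, dist_zero_right] at this
    have h1 : rL ≤ max rK rL := le_max_right _ _
    rw [hR]; linarith
  have hRpos : (0:ℝ) < R := by
    obtain ⟨k, hk⟩ := K.nonempty
    have h1 : ‖k‖ ≤ rK := by simpa [dist_eq_norm] using hrK hk
    have h2 : rK ≤ max rK rL := le_max_left _ _
    have h3 := norm_nonneg k
    rw [hR]; linarith
  -- main eventual statement
  have main : ∀ ε : ℝ, 0 < ε → ε ≤ ρ/4 → ε ≤ 1 →
      ∀ᶠ i in atTop, (((Ki i : Set E) ∩ (Li i : Set E)).Nonempty ∧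
        hausdorffDist ((Ki i : Set E) ∩ (Li i : Set E)) ((K : Set E) ∩ (L : Set E)) ≤
          (1 + 8 * (R + 1) / ρ) * ε) := by
    intro ε hε hερ hε1
    have hKev : ∀ᶠ i in atTop, dist (Ki i) K < ε := (Metric.tendsto_nhds.1 hK) ε hε
    have hLev : ∀ᶠ i in atTop, dist (Li i) L < ε := (Metric.tendsto_nhds.1 hL) ε hε
    filter_upwards [hKev, hLev] with i hiK hiL
    have hdK : hausdorffDist ((Ki i : Set E)) (K : Set E) ≤ ε := by
      rw [ConvexBody.hausdorffDist_coe]; exact hiK.le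
    have hdL : hausdorffDist ((Li i : Set E)) (L : Set E) ≤ ε := by
      rw [ConvexBody.hausdorffDist_coe]; exact hiL.le
    have hdK' : hausdorffDist (K : Set E) ((Ki i : Set E)) ≤ ε := by
      rw [hausdorffDist_comm]; exact hdK
    have hdL' : hausdorffDist (L : Set E) ((Li i : Set E)) ≤ ε := by
      rw [hausdorffDist_comm]; exact hdL
    have hKK' := aux_approx K.nonempty K.isBounded (Ki i).isCompact (Ki i).nonempty hdK'
    have hK'K := aux_approx (Ki i).nonempty (Ki i).isBounded K.isCompact K.nonempty hdK
    have hLL' := aux_approx L.nonempty L.isBounded (Li i).isCompact (Li i).nonempty hdL'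
    have hL'L := aux_approx (Li i).nonempty (Li i).isBounded L.isCompact L.nonempty hdL
    have hK'R : ∀ k ∈ ((Ki i) : Set E), ‖k‖ ≤ R + 1 := by
      intro k hk
      obtain ⟨x, hx, hdx⟩ := hK'K k hk
      calc ‖k‖ ≤ ‖x‖ + dist k x := by
            rw [dist_eq_norm]
            have := norm_add_le x (k - x)
            simpa using this
        _ ≤ R + 1 := by linarith [hKR x hx]
    have hKR1 : ∀ k ∈ (K : Set E), ‖k‖ ≤ R + 1 := fun k hk => by linarith [hKR k hk]
    have hsubKL : ∀ z ∈ closedBall (0:E) ρ,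
        ∃ k ∈ (K : Set E), ∃ l ∈ (L : Set E), k - l = z := by
      intro z hz
      exact Set.mem_sub.1 (hball hz)
    have := aux_quant K.convex L.convex (Ki i).convex (Li i).convex
      (Ki i).isCompact (Li i).isCompact hρ hε.le hερ hsubKL hKR1 hK'R
      hKK' hK'K hLL' hL'L
    exact ⟨this.1, this.2⟩
  set Cc : ℝ := 1 + 8 * (R + 1) / ρ with hCc
  have hCpos : 0 < Cc := by rw [hCc]; positivity
  set ε₀ : ℝ := min (ρ/4) 1 with hε₀
  have hε₀pos : 0 < ε₀ := by rw [hε₀]; positivity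
  constructor
  · exact (main ε₀ hε₀pos (min_le_left _ _) (min_le_right _ _)).mono
      (fun i hi => hi.1)
  · rw [Metric.tendsto_nhds]
    intro η hη
    set ε : ℝ := min ε₀ (η/(2*Cc)) with hεdef
    have hεpos : 0 < ε := by
      rw [hεdef]
      exact lt_min hε₀pos (by positivity)
    have h1 : ε ≤ ρ/4 := (min_le_left _ _).trans (min_le_left _ _)
    have h2 : ε ≤ 1 := (min_le_left _ _).trans (min_le_right _ _)
    refine (main ε hεpos h1 h2).mono (fun i hi => ?_)
    have h3 : hausdorffDist ((Ki i : Set E) ∩ (Li i : Set E))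
        ((K : Set E) ∩ (L : Set E)) ≤ Cc * ε := by
      have := hi.2
      linarith [this]
    have h4 : Cc * ε ≤ Cc * (η/(2*Cc)) :=
      mul_le_mul_of_nonneg_left (min_le_right _ _) hCpos.le
    have h5 : Cc * (η/(2*Cc)) = η/2 := by field_simp
    rw [Real.dist_eq, sub_zero, abs_of_nonneg hausdorffDist_nonneg]
    calc hausdorffDist ((Ki i : Set E) ∩ (Li i : Set E)) ((K : Set E) ∩ (L : Set E))
        ≤ Cc * ε := h3
      _ ≤ η/2 := by rw [← h5]; exact h4
      _ < η := by linarith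
end

section
/- Let P, P' be polytopes in a finite-dimensional real vector space V, let F be a face of P and F' a face of P'. If the relative interiors of F and F' intersect, then the conormal cone of P ∩ P' at the face F ∩ F' equals N(F,P) + N(F',P'), the Minkowski sum of the conormal cones of P at F and of P' at F'. -/
open Set Pointwise

variable {V : Type*} [NormedAddCommGroup V] [NormedSpace ℝ V]

/-- A polytope is the convex hull of finitely many points. -/
def IsPolytope (P : Set V) : Prop :=
  ∃ s : Finset V, P = convexHull ℝ (s : Set V)

/-- `F` is a face of the polytope `P`. -/
def IsFaceOf (P F : Set V) : Prop :=
  F = P ∨ ∃ f : V →ₗ[ℝ] ℝ, f ≠ 0 ∧ ∃ α : ℝ,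
    (∀ x ∈ P, f x ≤ α) ∧ F = P ∩ {x | f x = α}

/-- The conormal cone of `P` at the face `F`: all linear functionals attaining their maximum
over `P` at every point of `F` (i.e. `⟨ξ, v⟩ = h_P(ξ)` for all `v ∈ F`). -/
def conormalCone (P F : Set V) : Set (Module.Dual ℝ V) :=
  {ξ | ∀ v ∈ F, ∀ x ∈ P, ξ x ≤ ξ v}

/-! ### Auxiliary material: finitely generated cones -/

section Fcone

variable {W : Type*} [NormedAddCommGroup W] [NormedSpace ℝ W]

/-- The cone generated by a finite family of vectors. -/
def fcone {ι : Type*} [Fintype ι] (g : ι → W) : Set W :=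
  {x | ∃ lam : ι → ℝ, (∀ i, 0 ≤ lam i) ∧ ∑ i, lam i • g i = x}

variable {ι : Type*} [Fintype ι]

lemma zero_mem_fcone (g : ι → W) : (0 : W) ∈ fcone g :=
  ⟨0, fun _ => le_rfl, by simp⟩

lemma mem_fcone_self (g : ι → W) (i : ι) : g i ∈ fcone g := by
  classical
  refine ⟨Pi.single i 1, fun j => ?_, ?_⟩
  · rcases eq_or_ne j i with rfl | h
    · simp
    · simp [Pi.single_apply, h]
  · simp [Pi.single_apply, ite_smul]

lemma fcone_smul (g : ι → W) {c : ℝ} (hc : 0 ≤ c) {x : W} (hx : x ∈ fcone g) :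
    c • x ∈ fcone g := by
  obtain ⟨lam, hlam, rfl⟩ := hx
  exact ⟨fun i => c * lam i, fun i => mul_nonneg hc (hlam i), by
    simp [Finset.smul_sum, mul_smul]⟩

lemma fcone_convex (g : ι → W) : Convex ℝ (fcone g) := by
  rintro x ⟨lam, hlam, rfl⟩ y ⟨mu, hmu, rfl⟩ a b ha hb _
  refine ⟨fun i => a * lam i + b * mu i,
    fun i => add_nonneg (mul_nonneg ha (hlam i)) (mul_nonneg hb (hmu i)), ?_⟩
  simp [add_smul, mul_smul, Finset.sum_add_distrib, Finset.smul_sum]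

lemma sum_subtype_ne_add [DecidableEq ι] (f : ι → W) (i₀ : ι) :
    (∑ j : {j : ι // j ≠ i₀}, f j) + f i₀ = ∑ j, f j := by
  rw [← Finset.sum_subtype ({i₀}ᶜ : Finset ι) (fun j => by simp) f]
  rw [← Finset.sum_singleton (f := f) (a := i₀)]
  exact Finset.sum_compl_add_sum {i₀} f

lemma fcone_closed_aux [FiniteDimensional ℝ W] :
    ∀ (n : ℕ) (ι : Type u_3) [Fintype ι] (g : ι → W), Fintype.card ι ≤ n → IsClosed (fcone g) := by
  intro n
  induction n with
  | zero =>
    intro ι _ g hcard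
    have hempty : IsEmpty ι := Fintype.card_eq_zero_iff.mp (Nat.le_zero.mp hcard)
    have : fcone g = {0} := by
      ext x
      simp [fcone, eq_comm]
    rw [this]
    exact isClosed_singleton
  | succ n ih =>
    intro ι _ g hcard
    classical
    by_cases hli : LinearIndependent ℝ g
    · -- linearly independent: closed embedding
      have hker : LinearMap.ker (Fintype.linearCombination ℝ g) = ⊥ := by
        rw [LinearMap.ker_eq_bot']
        intro lam hlam
        rw [Fintype.linearCombination_apply] at hlam
        funext i
        exact Fintype.linearIndependent_iff.mp hli lam hlam i
      have hemb := LinearMap.isClosedEmbedding_of_injective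
        (f := Fintype.linearCombination ℝ g) hker
      have himg : fcone g
          = (Fintype.linearCombination ℝ g) '' {lam : ι → ℝ | ∀ i, 0 ≤ lam i} := by
        ext x
        constructor
        · rintro ⟨lam, h1, h2⟩
          exact ⟨lam, h1, by rw [Fintype.linearCombination_apply]; exact h2⟩
        · rintro ⟨lam, h1, h2⟩
          exact ⟨lam, h1, by rw [Fintype.linearCombination_apply] at h2; exact h2⟩
      have horth : IsClosed {lam : ι → ℝ | ∀ i, 0 ≤ lam i} := by
        have : {lam : ι → ℝ | ∀ i, 0 ≤ lam i} = ⋂ i, {lam : ι → ℝ | 0 ≤ lam i} := by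
          ext; simp
        rw [this]
        exact isClosed_iInter fun i => isClosed_le continuous_const (continuous_apply i)
      rw [himg]
      exact hemb.isClosedMap _ horth
    · -- linearly dependent: reduce to smaller families
      obtain ⟨c, hcsum, i₁, hi₁⟩ := Fintype.not_linearIndependent_iff.mp hli
      obtain ⟨c, hcsum, hneg⟩ : ∃ c : ι → ℝ, ∑ i, c i • g i = 0 ∧ ∃ i, c i < 0 := by
        rcases lt_trichotomy (c i₁) 0 with h | h | h
        · exact ⟨c, hcsum, i₁, h⟩
        · exact absurd h hi₁
        · refine ⟨-c, ?_, i₁, by simpa using h⟩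
          simpa [neg_smul] using congrArg Neg.neg hcsum
      have hEq : fcone g = ⋃ i : ι, fcone (fun j : {j : ι // j ≠ i} => g j.1) := by
        apply Subset.antisymm
        · rintro x ⟨lam, hlam, hx⟩
          set T : Finset ι := Finset.univ.filter (fun i => c i < 0) with hT
          have hTne : T.Nonempty := ⟨hneg.choose, by simp [hT, hneg.choose_spec]⟩
          obtain ⟨i₀, hi₀T, hi₀⟩ := T.exists_mem_eq_inf' hTne (fun i => lam i / (-c i))
          set t := T.inf' hTne (fun i => lam i / (-c i)) with ht
          have hci₀ : c i₀ < 0 := by simpa [hT] using hi₀T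
          have htnn : 0 ≤ t := by
            apply Finset.le_inf'
            intro b hb
            have hcb : c b < 0 := by simpa [hT] using hb
            exact div_nonneg (hlam b) (by linarith)
          have hlam' : ∀ j, 0 ≤ lam j + t * c j := by
            intro j
            rcases le_or_gt 0 (c j) with h | h
            · have := mul_nonneg htnn h
              linarith [hlam j]
            · have hjT : j ∈ T := by simp [hT, h]
              have : t ≤ lam j / (-c j) := ht ▸ Finset.inf'_le _ hjT
              have h2 : t * (-c j) ≤ lam j / (-c j) * (-c j) :=
                mul_le_mul_of_nonneg_right this (by linarith)
              rw [div_mul_cancel₀] at h2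
              · nlinarith
              · linarith
          have hzero : lam i₀ + t * c i₀ = 0 := by
            have hne : -c i₀ ≠ 0 := ne_of_gt (by linarith)
            rw [hi₀]
            have hre : lam i₀ / -c i₀ * c i₀ = -(lam i₀ / -c i₀ * -c i₀) := by ring
            rw [hre, div_mul_cancel₀ _ hne]
            ring
          have hxsum : ∑ j, (lam j + t * c j) • g j = x := by
            have : ∑ j, (lam j + t * c j) • g j
                = (∑ j, lam j • g j) + t • ∑ j, c j • g j := by
              rw [Finset.smul_sum]
              rw [← Finset.sum_add_distrib]
              congr 1
              funext j
              rw [add_smul, smul_smul]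
            rw [this, hcsum, smul_zero, add_zero, hx]
          refine mem_iUnion.mpr ⟨i₀, fun j => lam j.1 + t * c j.1, fun j => hlam' j.1, ?_⟩
          have hkey := sum_subtype_ne_add (fun j => (lam j + t * c j) • g j) i₀
          rw [hzero, zero_smul, add_zero, hxsum] at hkey
          exact hkey
        · intro x hx
          rw [mem_iUnion] at hx
          obtain ⟨i, lam, hlam, hx⟩ := hx
          set ext : ι → ℝ := fun j => if h : j = i then 0 else lam ⟨j, h⟩ with hext
          refine ⟨ext, fun j => ?_, ?_⟩
          · by_cases h : j = i <;> simp [hext, h, hlam]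
          · have hkey := sum_subtype_ne_add (fun j => ext j • g j) i
            have hi : ext i = 0 := by simp [hext]
            rw [← hkey, hi, zero_smul, add_zero, ← hx]
            apply Finset.sum_congr rfl
            intro j _
            have hj : ext j.1 = lam j := by
              rw [hext]
              simp only [dif_neg j.2]
            rw [hj]
      rw [hEq]
      apply isClosed_iUnion_of_finite
      intro i
      apply ih
      have h1 : Fintype.card {j : ι // j ≠ i} = Fintype.card ι - 1 := by
        have hcc := Fintype.card_subtype_compl (fun j : ι => j = i)
        rw [Fintype.card_subtype_eq] at hcc
        exact hcc
      have h2 : 1 ≤ Fintype.card ι := Fintype.card_pos_iff.mpr ⟨i⟩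
      omega

lemma fcone_closed [FiniteDimensional ℝ W] (g : ι → W) : IsClosed (fcone g) :=
  fcone_closed_aux (Fintype.card ι) ι g le_rfl

/-- Farkas-type separation: a point not in a finitely generated cone can be strictly
separated from it by a functional which is nonpositive on the generators. -/
lemma fcone_farkas [FiniteDimensional ℝ W] (g : ι → W) {x : W} (hx : x ∉ fcone g) :
    ∃ f : W →L[ℝ] ℝ, (∀ i, f (g i) ≤ 0) ∧ 0 < f x := by
  obtain ⟨f, u, hfu, hux⟩ :=
    geometric_hahn_banach_closed_point (fcone_convex g) (fcone_closed g) hx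
  have h0 : (0 : ℝ) < u := by simpa using hfu 0 (zero_mem_fcone g)
  refine ⟨f, fun i => ?_, lt_trans h0 hux⟩
  by_contra h
  push_neg at h
  obtain ⟨n, hn⟩ := exists_nat_gt (u / f (g i))
  have hmem : ((n : ℝ)) • g i ∈ fcone g := fcone_smul g (by positivity) (mem_fcone_self g i)
  have hlt := hfu _ hmem
  rw [map_smul, smul_eq_mul] at hlt
  have := (div_lt_iff₀ h).mp hn
  linarith

end Fcone

section Farkas

variable [FiniteDimensional ℝ V]

/-- The key polyhedral duality result: if `ξ` is nonpositive on the intersection of two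
finitely generated cones, it splits as a sum of functionals nonpositive on each cone. -/
lemma farkas_two {ι ι' : Type*} [Fintype ι] [Fintype ι'] (g : ι → V) (g' : ι' → V)
    (ξ : Module.Dual ℝ V) (h : ∀ w, w ∈ fcone g → w ∈ fcone g' → ξ w ≤ 0) :
    ∃ ξ₁ : Module.Dual ℝ V, (∀ i, ξ₁ (g i) ≤ 0) ∧ ∀ j, ξ (g' j) ≤ ξ₁ (g' j) := by
  classical
  set G : ι ⊕ ι' ⊕ PUnit.{1} → V × ℝ :=
    Sum.elim (fun i => (g i, 0))
      (Sum.elim (fun j => (-g' j, -ξ (g' j))) (fun _ => (0, 1))) with hGdef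
  by_cases hmem : ((0 : V), (-1 : ℝ)) ∈ fcone G
  · exfalso
    obtain ⟨lam, hlam, hsum⟩ := hmem
    have h1 : ∑ k, lam k • (G k).1 = 0 := by
      have := congrArg Prod.fst hsum
      rw [Prod.fst_sum] at this
      simpa using this
    have h2 : ∑ k, lam k • (G k).2 = -1 := by
      have := congrArg Prod.snd hsum
      rw [Prod.snd_sum] at this
      simpa using this
    rw [Fintype.sum_sum_type, Fintype.sum_sum_type] at h1 h2
    simp only [hGdef, Sum.elim_inl, Sum.elim_inr] at h1 h2
    set μ : ℝ := lam (Sum.inr (Sum.inr PUnit.unit)) with hμ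
    have hμ0 : 0 ≤ μ := hlam _
    have h1' : ∑ i, lam (Sum.inl i) • g i = ∑ j, lam (Sum.inr (Sum.inl j)) • g' j := by
      simp only [smul_neg, smul_zero, Finset.sum_const_zero, add_zero,
        Finset.sum_neg_distrib] at h1
      rwa [add_neg_eq_zero] at h1
    have h2' : ∑ j, lam (Sum.inr (Sum.inl j)) * ξ (g' j) = 1 + μ := by
      have e1 : ∑ x : ι, lam (Sum.inl x) • (0 : ℝ) = 0 := by simp
      have e2 : ∑ x : PUnit.{1}, lam (Sum.inr (Sum.inr x)) • (1 : ℝ) = μ := by simp [hμ]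
      have e3 : ∑ x : ι', lam (Sum.inr (Sum.inl x)) • -ξ (g' x)
          = -∑ j, lam (Sum.inr (Sum.inl j)) * ξ (g' j) := by
        rw [← Finset.sum_neg_distrib]
        apply Finset.sum_congr rfl
        intro j _
        simp [smul_eq_mul]
      rw [e1, e2, e3, zero_add] at h2
      linarith
    set w := ∑ j, lam (Sum.inr (Sum.inl j)) • g' j with hw
    have hw1 : w ∈ fcone g' := ⟨fun j => lam (Sum.inr (Sum.inl j)), fun j => hlam _, rfl⟩
    have hw2 : w ∈ fcone g := ⟨fun i => lam (Sum.inl i), fun i => hlam _, h1'⟩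
    have hξw : ξ w = ∑ j, lam (Sum.inr (Sum.inl j)) * ξ (g' j) := by
      rw [hw, map_sum]
      simp [map_smul]
    have hcontra := h w hw2 hw1
    rw [hξw, h2'] at hcontra
    linarith
  · obtain ⟨f, hfle, hfpos⟩ := fcone_farkas G hmem
    simp only [hGdef] at hfle
    have ht : f ((0 : V), (1 : ℝ)) ≤ 0 := by
      simpa using hfle (Sum.inr (Sum.inr PUnit.unit))
    have htneg : f ((0 : V), (1 : ℝ)) < 0 := by
      have : ((0 : V), (-1 : ℝ)) = -(((0 : V), (1 : ℝ))) := by ext <;> simp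
      rw [this, map_neg] at hfpos
      linarith
    set t : ℝ := f ((0 : V), (1 : ℝ)) with htdef
    set ξ₀ : Module.Dual ℝ V := (f.toLinearMap).comp (LinearMap.inl ℝ V ℝ) with hξ₀
    refine ⟨(-t)⁻¹ • ξ₀, fun i => ?_, fun j => ?_⟩
    · have hgi : f (g i, 0) ≤ 0 := by simpa using hfle (Sum.inl i)
      have hξ₀i : ξ₀ (g i) = f (g i, 0) := rfl
      have hpos : 0 < (-t)⁻¹ := inv_pos.mpr (by linarith)
      simp only [LinearMap.smul_apply, smul_eq_mul, hξ₀i]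
      exact mul_nonpos_of_nonneg_of_nonpos (le_of_lt hpos) hgi
    · have hle : f (-g' j, -ξ (g' j)) ≤ 0 := by simpa using hfle (Sum.inr (Sum.inl j))
      have hdecomp : ((-g' j : V), (-ξ (g' j) : ℝ))
          = -(((g' j : V), (0 : ℝ)) + (ξ (g' j)) • ((0 : V), (1 : ℝ))) := by
        ext <;> simp
      rw [hdecomp, map_neg, map_add, map_smul, smul_eq_mul] at hle
      have hfj : 0 ≤ f (g' j, 0) + ξ (g' j) * t := by linarith
      have hξ₀j : ξ₀ (g' j) = f (g' j, 0) := rfl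
      simp only [LinearMap.smul_apply, smul_eq_mul, hξ₀j]
      have htpos : 0 < -t := by linarith
      rw [← sub_nonneg]
      have heq : (-t)⁻¹ * f (g' j, 0) - ξ (g' j) = (-t)⁻¹ * (f (g' j, 0) + ξ (g' j) * t) := by
        have hne : -t ≠ 0 := ne_of_gt htpos
        linear_combination (ξ (g' j)) * inv_mul_cancel₀ hne
      rw [heq]
      exact mul_nonneg (le_of_lt (inv_pos.mpr htpos)) hfj

end Farkas

section Geometry

/-- Moving from a point of a convex set a little along a direction that stays in the set. -/
lemma seg_mem_of_convex {P : Set V} (hconv : Convex ℝ P) {z w : V} {ε δ : ℝ}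
    (hε : 0 < ε) (hz : z ∈ P) (hzw : z + ε • w ∈ P) (hδ0 : 0 ≤ δ) (hδε : δ ≤ ε) :
    z + δ • w ∈ P := by
  have ha : 0 ≤ 1 - δ / ε := by
    rw [sub_nonneg]
    exact div_le_one_of_le₀ hδε (le_of_lt hε)
  have hb : 0 ≤ δ / ε := div_nonneg hδ0 (le_of_lt hε)
  have hmem := hconv hz hzw ha hb (by ring)
  have : (1 - δ / ε) • z + (δ / ε) • (z + ε • w) = z + δ • w := by
    rw [smul_add, smul_smul, div_mul_cancel₀ _ (ne_of_gt hε)]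
    module
  rwa [this] at hmem

/-- If `w` lies in the cone generated by `p - z` for `p` in a finite set `s` with
`z ∈ conv s`, then some point `z + ε • w` lies in `conv s`. -/
lemma exists_eps_mem (s : Finset V) {z w : V} (hz : z ∈ convexHull ℝ (s : Set V))
    (hw : w ∈ fcone (fun p : ↥s => (p : V) - z)) :
    ∃ ε : ℝ, 0 < ε ∧ z + ε • w ∈ convexHull ℝ (s : Set V) := by
  obtain ⟨lam, hlam, hsum⟩ := hw
  set T := ∑ i : ↥s, lam i with hTdef
  have hT : 0 ≤ T := Finset.sum_nonneg fun i _ => hlam i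
  rcases eq_or_lt_of_le hT with hT0 | hTpos
  · have hall : ∀ i ∈ (Finset.univ : Finset ↥s), lam i = 0 := by
      rw [← Finset.sum_eq_zero_iff_of_nonneg fun i _ => hlam i]
      exact hT0.symm
    have hw0 : w = 0 := by
      rw [← hsum]
      apply Finset.sum_eq_zero
      intro i hi
      rw [hall i hi, zero_smul]
    exact ⟨1, one_pos, by simpa [hw0] using hz⟩
  · refine ⟨T⁻¹, inv_pos.mpr hTpos, ?_⟩
    have hc : ∑ i : ↥s, T⁻¹ * lam i = 1 := by
      rw [← Finset.mul_sum, ← hTdef, inv_mul_cancel₀ (ne_of_gt hTpos)]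
    have hpt : z + T⁻¹ • w = ∑ i : ↥s, (T⁻¹ * lam i) • (i : V) := by
      rw [← hsum, Finset.smul_sum]
      have hterm : ∀ i : ↥s, T⁻¹ • lam i • ((i : V) - z)
          = (T⁻¹ * lam i) • (i : V) - (T⁻¹ * lam i) • z := by
        intro i
        rw [smul_smul, smul_sub]
      rw [Finset.sum_congr rfl fun i _ => hterm i, Finset.sum_sub_distrib,
        ← Finset.sum_smul, hc, one_smul]
      abel
    rw [hpt]
    exact (convex_convexHull ℝ (s : Set V)).sum_mem (fun i _ => mul_nonneg (le_of_lt
      (inv_pos.mpr hTpos)) (hlam i)) hc (fun i _ => subset_convexHull ℝ (s : Set V) i.2)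

/-- From a relative interior point one can move slightly away from any point of the set,
staying inside the set. -/
lemma relint_push {F : Set V} {z v : V} (hz : z ∈ intrinsicInterior ℝ F) (hv : v ∈ F) :
    ∃ δ : ℝ, 0 < δ ∧ z + δ • (z - v) ∈ F := by
  obtain ⟨z₀, hz₀, hz₀eq⟩ := hz
  have hvspan : v ∈ affineSpan ℝ F := subset_affineSpan ℝ F hv
  have hmem : ∀ δ : ℝ, (z₀ : V) + δ • ((z₀ : V) - v) ∈ affineSpan ℝ F := by
    intro δ
    have := AffineSubspace.smul_vsub_vadd_mem (affineSpan ℝ F) δ z₀.2 hvspan z₀.2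
    simpa [vsub_eq_sub, vadd_eq_add, add_comm] using this
  set φ : ℝ → affineSpan ℝ F := fun δ => ⟨(z₀ : V) + δ • ((z₀ : V) - v), hmem δ⟩ with hφ
  have hφcont : Continuous φ := by
    apply Continuous.subtype_mk
    fun_prop
  have hφ0 : φ 0 = z₀ := Subtype.ext (by simp [hφ])
  have hnhds : φ ⁻¹' interior ((↑) ⁻¹' F : Set (affineSpan ℝ F)) ∈ nhds (0 : ℝ) :=
    hφcont.continuousAt.preimage_mem_nhds (by rw [hφ0]; exact isOpen_interior.mem_nhds hz₀)
  obtain ⟨ε, hε, hball⟩ := Metric.mem_nhds_iff.mp hnhds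
  have hmemball : (ε / 2 : ℝ) ∈ Metric.ball (0 : ℝ) ε := by
    rw [Metric.mem_ball, Real.dist_eq, sub_zero, abs_of_pos (by positivity)]
    linarith
  have hφF : φ (ε / 2) ∈ interior ((↑) ⁻¹' F : Set (affineSpan ℝ F)) := hball hmemball
  have hpre : φ (ε / 2) ∈ ((↑) ⁻¹' F : Set (affineSpan ℝ F)) := interior_subset hφF
  have hmemF : (φ (ε / 2) : V) ∈ F := hpre
  exact ⟨ε / 2, by positivity, by rw [← hz₀eq]; simpa [hφ] using hmemF⟩

/-- A functional maximized over `P` at a relative interior point of `F ⊆ P` is maximized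
at every point of `F`. -/
lemma conormal_of_max_at_relint {P F : Set V} (hFP : F ⊆ P) {z : V}
    (hz : z ∈ intrinsicInterior ℝ F) (ξ₁ : Module.Dual ℝ V)
    (hmax : ∀ x ∈ P, ξ₁ x ≤ ξ₁ z) : ξ₁ ∈ conormalCone P F := by
  intro v hv x hx
  obtain ⟨δ, hδ, hmemF⟩ := relint_push hz hv
  have h1 := hmax _ (hFP hmemF)
  have h2 : ξ₁ z + δ * (ξ₁ z - ξ₁ v) ≤ ξ₁ z := by
    simpa [map_add, map_smul, map_sub, smul_eq_mul] using h1
  have hzv : ξ₁ z ≤ ξ₁ v := by nlinarith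
  exact le_trans (hmax x hx) hzv

end Geometry

/-- If the relative interiors of the faces `F ⊆ P` and `F' ⊆ P'` meet, then
`N(F ∩ F', P ∩ P') = N(F, P) + N(F', P')`. -/
theorem conormalCone_inter [FiniteDimensional ℝ V] {P P' F F' : Set V}
    (hP : IsPolytope P) (hP' : IsPolytope P')
    (hF : IsFaceOf P F) (hF' : IsFaceOf P' F')
    (hri : (intrinsicInterior ℝ F ∩ intrinsicInterior ℝ F').Nonempty) :
    conormalCone (P ∩ P') (F ∩ F') = conormalCone P F + conormalCone P' F' := by
  obtain ⟨z, hzF, hzF'⟩ := hri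
  have hzF1 : z ∈ F := intrinsicInterior_subset hzF
  have hzF'1 : z ∈ F' := intrinsicInterior_subset hzF'
  have hFP : F ⊆ P := by
    rcases hF with h | ⟨f, -, α, -, h⟩
    · exact h ▸ Subset.rfl
    · exact h ▸ inter_subset_left
  have hF'P' : F' ⊆ P' := by
    rcases hF' with h | ⟨f, -, α, -, h⟩
    · exact h ▸ Subset.rfl
    · exact h ▸ inter_subset_left
  have hzP : z ∈ P := hFP hzF1
  have hzP' : z ∈ P' := hF'P' hzF'1
  obtain ⟨s, hPs⟩ := hP
  obtain ⟨s', hP's⟩ := hP'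
  apply Subset.antisymm
  · intro ξ hξ
    set g : ↥s → V := fun p => (p : V) - z with hg
    set g' : ↥s' → V := fun p => (p : V) - z with hg'
    have hkey : ∀ w, w ∈ fcone g → w ∈ fcone g' → ξ w ≤ 0 := by
      intro w hw hw'
      obtain ⟨ε, hε, hmem⟩ := exists_eps_mem s (hPs ▸ hzP) hw
      obtain ⟨ε', hε', hmem'⟩ := exists_eps_mem s' (hP's ▸ hzP') hw'
      set δ := min ε ε' with hδdef
      have hδ : 0 < δ := lt_min hε hε'
      have h1 : z + δ • w ∈ P := by
        rw [hPs]
        exact seg_mem_of_convex (convex_convexHull ℝ _) hε (hPs ▸ hzP) hmem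
          (le_of_lt hδ) (min_le_left _ _)
      have h2 : z + δ • w ∈ P' := by
        rw [hP's]
        exact seg_mem_of_convex (convex_convexHull ℝ _) hε' (hP's ▸ hzP') hmem'
          (le_of_lt hδ) (min_le_right _ _)
      have hle := hξ z ⟨hzF1, hzF'1⟩ (z + δ • w) ⟨h1, h2⟩
      have : ξ z + δ * ξ w ≤ ξ z := by
        simpa [map_add, map_smul, smul_eq_mul] using hle
      nlinarith
    obtain ⟨ξ₁, hξ₁, hξ₂⟩ := farkas_two g g' ξ hkey
    have hmax1 : ∀ x ∈ P, ξ₁ x ≤ ξ₁ z := by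
      intro x hx
      have hsub : P ⊆ {y | ξ₁ y ≤ ξ₁ z} := by
        rw [hPs]
        apply convexHull_min ?_ (convex_halfSpace_le (ξ₁.isLinear) _)
        intro p hp
        have := hξ₁ ⟨p, hp⟩
        simp only [hg, map_sub, sub_nonpos] at this
        exact this
      exact hsub hx
    have hmax2 : ∀ x ∈ P', (ξ - ξ₁) x ≤ (ξ - ξ₁) z := by
      intro x hx
      have hsub : P' ⊆ {y | (ξ - ξ₁) y ≤ (ξ - ξ₁) z} := by
        rw [hP's]
        apply convexHull_min ?_ (convex_halfSpace_le ((ξ - ξ₁).isLinear) _)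
        intro p hp
        have h := hξ₂ ⟨p, hp⟩
        simp only [hg', map_sub] at h
        show (ξ - ξ₁) p ≤ (ξ - ξ₁) z
        simp only [LinearMap.sub_apply]
        linarith [h]
      exact hsub hx
    refine Set.mem_add.mpr ⟨ξ₁, ?_, ξ - ξ₁, ?_, by abel⟩
    · exact conormal_of_max_at_relint hFP hzF ξ₁ hmax1
    · exact conormal_of_max_at_relint hF'P' hzF' (ξ - ξ₁) hmax2
  · rintro ξ hξ
    obtain ⟨a, ha, b, hb, rfl⟩ := Set.mem_add.mp hξ
    intro v hv x hx
    have h1 := ha v hv.1 x hx.1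
    have h2 := hb v hv.2 x hx.2
    simp only [LinearMap.add_apply]
    exact add_le_add h1 h2
end

section
/- Let f : V → W be a linear surjection of finite-dimensional real vector spaces and let X, X' be two linear complements of ker f in V. Then for all densities μ on ker f and ν on W, the product densities μ × ((f|_X)⁻¹)_*ν and μ × ((f|_{X'})⁻¹)_*ν on V = ker f ⊕ X = ker f ⊕ X' coincide. -/
open MeasureTheory

/-- For a linear surjection `f : V → W` and two complements `X, X'` of
`ker f`, the product densities `μ × ((f|_X)⁻¹)_* ν` and `μ × ((f|_{X'})⁻¹)_* ν` on `V`
coincide, for all densities `μ` on `ker f` and `ν` on `W`.  The product density is realized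
as the pushforward of `μ.prod ν` under `(x, w) ↦ x + g w`, where `g : W → V` is the linear
section of `f` with range `X`. -/
theorem product_density_independent_of_complement
    {V W : Type*}
    [NormedAddCommGroup V] [NormedSpace ℝ V] [FiniteDimensional ℝ V]
    [MeasurableSpace V] [BorelSpace V]
    [NormedAddCommGroup W] [NormedSpace ℝ W] [FiniteDimensional ℝ W]
    [MeasurableSpace W] [BorelSpace W]
    (f : V →ₗ[ℝ] W) (hf : Function.Surjective f)
    (X X' : Submodule ℝ V)
    (hX : IsCompl (LinearMap.ker f) X) (hX' : IsCompl (LinearMap.ker f) X')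
    (g g' : W →ₗ[ℝ] V)
    (hg : f.comp g = LinearMap.id) (hgr : LinearMap.range g = X)
    (hg' : f.comp g' = LinearMap.id) (hgr' : LinearMap.range g' = X')
    (μ : Measure (LinearMap.ker f)) (ν : Measure W)
    [μ.IsAddHaarMeasure] [ν.IsAddHaarMeasure] [SFinite μ] [SFinite ν] :
    Measure.map (fun p : (LinearMap.ker f) × W => (p.1 : V) + g p.2) (μ.prod ν) =
    Measure.map (fun p : (LinearMap.ker f) × W => (p.1 : V) + g' p.2) (μ.prod ν) := by
  have hker : ∀ w, g' w - g w ∈ LinearMap.ker f := by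
    intro w
    have h1 : f (g w) = w := LinearMap.ext_iff.mp hg w
    have h2 : f (g' w) = w := LinearMap.ext_iff.mp hg' w
    simp [LinearMap.mem_ker, map_sub, h1, h2]
  set k : W →ₗ[ℝ] (LinearMap.ker f) :=
    LinearMap.codRestrict (LinearMap.ker f) (g' - g) hker with hk
  have hkcont : Continuous k := k.continuous_of_finiteDimensional
  have hkm : Measurable k := hkcont.measurable
  -- skew product on W × ker f
  have hT' : MeasurePreserving (fun p : W × (LinearMap.ker f) => (p.1, p.2 + k p.1))
      (ν.prod μ) (ν.prod μ) := by
    refine MeasurePreserving.skew_product (g := fun w x => x + k w) (μd := μ)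
        (MeasurePreserving.id ν) ?_ ?_
    · exact measurable_snd.add (hkm.comp measurable_fst)
    · filter_upwards with w
      exact (measurePreserving_add_right μ (k w)).map_eq
  have hTm : Measurable (fun p : (LinearMap.ker f) × W => (p.1 + k p.2, p.2)) :=
    (measurable_fst.add (hkm.comp measurable_snd)).prodMk measurable_snd
  have hφ : Measurable (fun p : (LinearMap.ker f) × W => (p.1 : V) + g p.2) := by
    exact ((continuous_subtype_val.comp continuous_fst).add
      (g.continuous_of_finiteDimensional.comp continuous_snd)).measurable
  have hswap : Measurable (Prod.swap : W × (LinearMap.ker f) → (LinearMap.ker f) × W) :=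
    measurable_swap
  have hmapT : Measure.map (fun p : (LinearMap.ker f) × W => (p.1 + k p.2, p.2)) (μ.prod ν)
      = μ.prod ν := by
    have h1 : μ.prod ν = Measure.map Prod.swap (ν.prod μ) := (Measure.prod_swap).symm
    rw [h1, Measure.map_map hTm hswap]
    have : ((fun p : (LinearMap.ker f) × W => (p.1 + k p.2, p.2)) ∘ Prod.swap)
        = Prod.swap ∘ (fun p : W × (LinearMap.ker f) => (p.1, p.2 + k p.1)) := rfl
    rw [this, ← Measure.map_map hswap hT'.measurable, hT'.map_eq]
  calc Measure.map (fun p : (LinearMap.ker f) × W => (p.1 : V) + g p.2) (μ.prod ν)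
      = Measure.map (fun p : (LinearMap.ker f) × W => (p.1 : V) + g p.2)
          (Measure.map (fun p : (LinearMap.ker f) × W => (p.1 + k p.2, p.2)) (μ.prod ν)) := by
        rw [hmapT]
    _ = Measure.map (fun p : (LinearMap.ker f) × W => (p.1 : V) + g' p.2) (μ.prod ν) := by
        rw [Measure.map_map hφ hTm]
        congr 1
        funext p
        show ((p.1 + k p.2 : LinearMap.ker f) : V) + g p.2 = (p.1 : V) + g' p.2
        simp [hk, LinearMap.codRestrict]
        abel
end

section
/- Given m ≥ 3 points in the real projective plane, not all lying on a common line, there exists a line containing exactly two of the points. -/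
open Projectivization

namespace MotzkinAux

open Matrix

abbrev V3 := Fin 3 → ℝ

noncomputable def Dsq (x y z : V3) : ℝ :=
  ((x - y) ⬝ᵥ (x - y) * ((z - y) ⬝ᵥ (z - y)) - ((x - y) ⬝ᵥ (z - y))^2) / ((z - y) ⬝ᵥ (z - y))

lemma dot_self_pos {v : V3} (h : v ≠ 0) : 0 < v ⬝ᵥ v := by
  have h0 : 0 ≤ v ⬝ᵥ v := Finset.sum_nonneg fun i _ => mul_self_nonneg _
  rcases h0.lt_or_eq with h1 | h1
  · exact h1
  · exact absurd (dotProduct_self_eq_zero.mp h1.symm) h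

lemma dot_expand (u w : V3) (h : u ⬝ᵥ w = 0) (a b c d : ℝ) :
    (a•u + b•w) ⬝ᵥ (c•u + d•w) = a*c*(u⬝ᵥu) + b*d*(w⬝ᵥw) := by
  have h' : w ⬝ᵥ u = 0 := by rw [dotProduct_comm]; exact h
  simp [dotProduct_add, add_dotProduct, smul_dotProduct,
    dotProduct_smul, h, h', smul_eq_mul]
  ring

private lemma realA (U W β γ : ℝ) (hU : 0 < U) (hne : β ≠ γ) :
    ((-β)*(-β)*U + 1*1*W) * ((γ-β)*(γ-β)*U + 0*0*W) - ((-β)*(γ-β)*U + 1*0*W)^2 =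
      W * ((γ-β)*(γ-β)*U + 0*0*W) := by ring

lemma DsqA (f u w : V3) (horth : u ⬝ᵥ w = 0) (hU : 0 < u ⬝ᵥ u)
    {β γ : ℝ} (hne : β ≠ γ) :
    Dsq (f + w) (f + β•u) (f + γ•u) = w ⬝ᵥ w := by
  have e1 : (f + w) - (f + β•u) = (-β)•u + (1:ℝ)•w := by module
  have e2 : (f + γ•u) - (f + β•u) = (γ - β)•u + (0:ℝ)•w := by module
  rw [Dsq, e1, e2, dot_expand u w horth, dot_expand u w horth, dot_expand u w horth,
    realA _ _ _ _ hU hne, mul_div_assoc]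
  have hd : γ - β ≠ 0 := sub_ne_zero.mpr (Ne.symm hne)
  have hpos : 0 < (γ-β)*(γ-β)*(u⬝ᵥu) + 0*0*(w⬝ᵥw) := by
    have := mul_pos (mul_self_pos.mpr hd) hU
    nlinarith
  rw [div_self (ne_of_gt hpos), mul_one]

lemma DsqB (f u w : V3) (horth : u ⬝ᵥ w = 0) (hU : 0 < u ⬝ᵥ u) (hW : 0 < w ⬝ᵥ w)
    {β γ : ℝ} (hsame : β^2 ≤ β*γ) :
    Dsq (f + β•u) (f + w) (f + γ•u) < w ⬝ᵥ w := by
  have e1 : (f + β•u) - (f + w) = β•u + (-1:ℝ)•w := by module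
  have e2 : (f + γ•u) - (f + w) = γ•u + (-1:ℝ)•w := by module
  rw [Dsq, e1, e2, dot_expand u w horth, dot_expand u w horth, dot_expand u w horth]
  set U := u ⬝ᵥ u with hUdef
  set W := w ⬝ᵥ w with hWdef
  have hden : 0 < γ*γ*U + (-1)*(-1)*W := by nlinarith [mul_nonneg (mul_self_nonneg γ) hU.le]
  rw [div_lt_iff₀ hden]
  nlinarith [mul_nonneg (sub_nonneg.mpr hsame) hU.le, mul_pos hU hW,
    mul_nonneg (mul_nonneg (sub_nonneg.mpr hsame) hU.le) hU.le,
    mul_nonneg (mul_nonneg (sub_nonneg.mpr hsame) hU.le) hW.le, sq_nonneg β]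


private lemma helper (a b : ℝ) (h : 0 ≤ a * b) : a^2 ≤ a*b ∨ b^2 ≤ b*a := by
  rcases le_total (a^2) (b^2) with h1 | h1
  · left; nlinarith [sq_nonneg a, sq_nonneg b]
  · right; nlinarith [sq_nonneg a, sq_nonneg b]

lemma same_side (c : Fin 3 → ℝ) : ∃ i j : Fin 3, i ≠ j ∧ (c i)^2 ≤ c i * c j := by
  have key : ∃ i j : Fin 3, i ≠ j ∧ 0 ≤ c i * c j := by
    rcases le_or_gt 0 (c 0 * c 1) with h01 | h01
    · exact ⟨0, 1, by decide, h01⟩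
    rcases le_or_gt 0 (c 0 * c 2) with h02 | h02
    · exact ⟨0, 2, by decide, h02⟩
    refine ⟨1, 2, by decide, ?_⟩
    nlinarith [mul_pos (neg_pos.mpr h01) (neg_pos.mpr h02), sq_nonneg (c 0)]
  obtain ⟨i, j, hij, h⟩ := key
  rcases helper _ _ h with h' | h'
  · exact ⟨i, j, hij, h'⟩
  · exact ⟨j, i, hij.symm, by rwa [mul_comm (c j) (c i)] at h' ⊢⟩

lemma core (T : Finset V3) (x y z : V3) (hx : x ∈ T) (hy : y ∈ T) (hz : z ∈ T)
    (hyz : y ≠ z) (hncol : ¬ ∃ t : ℝ, x = y + t • (z - y)) :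
    ∃ p ∈ T, ∃ q ∈ T, p ≠ q ∧ ∀ r ∈ T, (∀ t : ℝ, r ≠ p + t • (q - p)) ∨ r = p ∨ r = q := by
  classical
  let A : Finset (V3 × V3 × V3) := (T ×ˢ T ×ˢ T).filter
    (fun q => q.2.1 ≠ q.2.2 ∧ ¬ ∃ t : ℝ, q.1 = q.2.1 + t • (q.2.2 - q.2.1))
  have hxyzA : (x, y, z) ∈ A := by
    simp only [A, Finset.mem_filter, Finset.mem_product]
    exact ⟨⟨hx, hy, hz⟩, hyz, hncol⟩
  obtain ⟨m, hmA, hmin⟩ := A.exists_min_image (fun q => Dsq q.1 q.2.1 q.2.2) ⟨_, hxyzA⟩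
  obtain ⟨p, a, b⟩ := m
  simp only [A, Finset.mem_filter, Finset.mem_product] at hmA
  obtain ⟨⟨hpT, haT, hbT⟩, hab, hpnot⟩ := hmA
  refine ⟨a, haT, b, hbT, hab, ?_⟩
  intro r hrT
  by_contra hcon
  push_neg at hcon
  obtain ⟨⟨t, hrt⟩, hra, hrb⟩ := hcon
  -- setup: foot of perpendicular from p to line a b
  set u : V3 := b - a with hu_def
  have hu : u ≠ 0 := sub_ne_zero.mpr (Ne.symm hab)
  have hU : 0 < u ⬝ᵥ u := dot_self_pos hu
  set t0 : ℝ := ((p - a) ⬝ᵥ u) / (u ⬝ᵥ u) with ht0_def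
  set f : V3 := a + t0 • u with hf_def
  set w : V3 := p - f with hw_def
  have hpf : p = f + w := by rw [hw_def]; module
  have horth : u ⬝ᵥ w = 0 := by
    have hw2 : w = (p - a) - t0 • u := by rw [hw_def, hf_def]; module
    rw [hw2, dotProduct_sub, dotProduct_smul, smul_eq_mul,
      dotProduct_comm u (p - a), ht0_def, div_mul_cancel₀ _ (ne_of_gt hU), sub_self]
  have hw0 : w ≠ 0 := by
    intro h0
    rw [hw_def] at h0
    exact hpnot ⟨t0, sub_eq_zero.mp h0⟩
  have hW : 0 < w ⬝ᵥ w := dot_self_pos hw0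
  -- coordinates of a, b, r on the line
  set P : Fin 3 → V3 := ![a, b, r] with hP_def
  set c : Fin 3 → ℝ := ![0 - t0, 1 - t0, t - t0] with hc_def
  clear_value P c
  have hPmem : ∀ i, P i ∈ T := by
    intro i; fin_cases i <;> rw [hP_def] <;> simp <;> assumption
  have hPc : ∀ i, P i = f + c i • u := by
    intro i
    fin_cases i <;> rw [hP_def, hc_def] <;> simp <;>
      first
        | (rw [hrt, hf_def, hu_def]; module)
        | (rw [hf_def, hu_def]; module)
        | (rw [hf_def]; module)
  have hPne : ∀ i j : Fin 3, i ≠ j → P i ≠ P j := by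
    intro i j hij
    fin_cases i <;> fin_cases j <;> rw [hP_def] <;> simp <;>
      first
        | exact absurd rfl hij | exact hab | exact hab.symm
        | exact hra | exact hra.symm | exact hrb | exact hrb.symm
  have hcne : ∀ i j : Fin 3, i ≠ j → c i ≠ c j := by
    intro i j hij hceq
    exact hPne i j hij (by rw [hPc i, hPc j, hceq])
  obtain ⟨i, j, hij, hsame⟩ := same_side c
  have hcij : c i ≠ c j := hcne i j hij
  -- the triple (P i, p, P j) is admissible
  have hpPj : p ≠ P j := by
    intro he
    rw [hPc j] at he
    have hwu : w = c j • u := by rw [hpf] at he; exact add_left_cancel he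
    have : c j * (u ⬝ᵥ u) = 0 := by
      rw [← smul_eq_mul, ← dotProduct_smul, ← hwu, horth]
    have hcj0 : c j = 0 := by
      rcases mul_eq_zero.mp this with h | h
      · exact h
      · exact absurd h (ne_of_gt hU)
    exact hw0 (by rw [hwu, hcj0, zero_smul])
  have hnotline : ¬ ∃ t' : ℝ, P i = p + t' • (P j - p) := by
    rintro ⟨t', ht'⟩
    rw [hPc i, hPc j, hpf] at ht'
    have key : (c i - t' * c j) • u = (1 - t') • w := by
      linear_combination (norm := module) ht'
    have d1 : (c i - t' * c j) * (u ⬝ᵥ u) = 0 := by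
      have := congrArg (fun v => u ⬝ᵥ v) key
      simpa [dotProduct_smul, smul_eq_mul, horth] using this
    have hci : c i = t' * c j := by
      rcases mul_eq_zero.mp d1 with h | h
      · linarith
      · exact absurd h (ne_of_gt hU)
    have d2 : 0 = (1 - t') * (w ⬝ᵥ w) := by
      have := congrArg (fun v => w ⬝ᵥ v) key
      have hwu' : w ⬝ᵥ u = 0 := by rw [dotProduct_comm]; exact horth
      simpa [dotProduct_smul, smul_eq_mul, hwu'] using this
    have ht1 : t' = 1 := by
      rcases mul_eq_zero.mp d2.symm with h | h
      · linarith
      · exact absurd h (ne_of_gt hW)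
    rw [ht1, one_mul] at hci
    exact hcij hci
  have hmemA : (P i, p, P j) ∈ A := by
    simp only [A, Finset.mem_filter, Finset.mem_product]
    exact ⟨⟨hPmem i, hpT, hPmem j⟩, hpPj, hnotline⟩
  have hle := hmin _ hmemA
  have h1 : Dsq (P i) p (P j) < w ⬝ᵥ w := by
    rw [hPc i, hPc j, hpf]
    exact DsqB f u w horth hU hW hsame
  have h2 : Dsq p a b = w ⬝ᵥ w := by
    have ha' : a = P 0 := by rw [hP_def]; simp
    have hb' : b = P 1 := by rw [hP_def]; simp
    rw [hpf, ha', hb', hPc 0, hPc 1]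
    exact DsqA f u w horth hU (hcne 0 1 (by decide))
  simp only at hle
  rw [h2] at hle
  linarith


lemma avoid (F : Finset V3) (hF : ∀ v ∈ F, v ≠ 0) : ∃ y : V3, ∀ v ∈ F, y ⬝ᵥ v ≠ 0 := by
  classical
  induction F using Finset.induction_on with
  | empty => exact ⟨0, by simp⟩
  | insert _ _ hvF ih =>
    rename_i v F
    obtain ⟨y, hy⟩ := ih (fun w hw => hF w (Finset.mem_insert_of_mem hw))
    have hv0 : v ≠ 0 := hF v (Finset.mem_insert_self _ _)
    set bad : Finset ℝ := (insert v F).image (fun w => -(y ⬝ᵥ w)/(v ⬝ᵥ w)) with hbad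
    obtain ⟨ε, hε⟩ := Infinite.exists_notMem_finset bad
    refine ⟨y + ε • v, ?_⟩
    intro w hw h0
    have hlin : (y ⬝ᵥ w) + ε * (v ⬝ᵥ w) = 0 := by
      rw [← h0, add_dotProduct, smul_dotProduct, smul_eq_mul]
    by_cases hvw : v ⬝ᵥ w = 0
    · rcases Finset.mem_insert.mp hw with rfl | hwF
      · exact hv0 (dotProduct_self_eq_zero.mp hvw)
      · rw [hvw, mul_zero, add_zero] at hlin
        exact hy w hwF hlin
    · apply hε
      have hεeq : ε = -(y ⬝ᵥ w)/(v ⬝ᵥ w) := by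
        rw [eq_div_iff hvw]; linarith
      rw [hbad, hεeq]
      exact Finset.mem_image_of_mem _ hw


end MotzkinAux

open MotzkinAux Matrix in
/-- **Motzkin.** Given at least three points in the real projective plane,
not all on a common line, there is a line containing exactly two of the points. -/
theorem motzkin_two_point_line
    (s : Finset (Projectivization ℝ (Fin 3 → ℝ)))
    (hcard : 3 ≤ s.card)
    (hnc : ¬ ∃ W : Submodule ℝ (Fin 3 → ℝ), Module.finrank ℝ W = 2 ∧
      ∀ p ∈ s, Projectivization.submodule p ≤ W) :
    ∃ W : Submodule ℝ (Fin 3 → ℝ), Module.finrank ℝ W = 2 ∧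
      ∃ p ∈ s, ∃ q ∈ s, p ≠ q ∧
        Projectivization.submodule p ≤ W ∧ Projectivization.submodule q ≤ W ∧
        ∀ r ∈ s, Projectivization.submodule r ≤ W → r = p ∨ r = q := by
  classical
  obtain ⟨e, he⟩ := avoid (s.image Projectivization.rep) (by
    intro v hv
    obtain ⟨p, _, rfl⟩ := Finset.mem_image.mp hv
    exact p.rep_nonzero)
  have hes : ∀ p ∈ s, e ⬝ᵥ p.rep ≠ 0 := fun p hp => he _ (Finset.mem_image_of_mem _ hp)
  set g : Projectivization ℝ V3 → V3 := fun p => (e ⬝ᵥ p.rep)⁻¹ • p.rep with hg_def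
  have hge : ∀ p ∈ s, e ⬝ᵥ g p = 1 := by
    intro p hp
    rw [hg_def]
    simp only [dotProduct_smul, smul_eq_mul]
    exact inv_mul_cancel₀ (hes p hp)
  have hg0 : ∀ p ∈ s, g p ≠ 0 := by
    intro p hp h0
    have := hge p hp
    rw [h0, dotProduct_zero] at this
    exact zero_ne_one this
  have hgspan : ∀ p ∈ s, Projectivization.submodule p = (ℝ ∙ g p : Submodule ℝ V3) := by
    intro p hp
    rw [Projectivization.submodule_eq, hg_def]
    exact (Submodule.span_singleton_smul_eq
      (isUnit_iff_ne_zero.mpr (inv_ne_zero (hes p hp))) _).symm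
  have hgne : ∀ p ∈ s, ∀ q ∈ s, g p = g q → p = q := by
    intro p hp q hq h
    apply Projectivization.submodule_injective
    rw [hgspan p hp, hgspan q hq, h]
  -- rank 2 of span pairs
  have hrank : ∀ p ∈ s, ∀ q ∈ s, p ≠ q →
      Module.finrank ℝ (Submodule.span ℝ {g p, g q} : Submodule ℝ V3) = 2 := by
    intro p hp q hq hpq
    have hsp : (Submodule.span ℝ {g p, g q} : Submodule ℝ V3) = (ℝ ∙ g p) ⊔ (ℝ ∙ g q) := by
      rw [show ({g p, g q} : Set V3) = {g p} ∪ {g q} from by rw [Set.singleton_union],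
        Submodule.span_union]
    have hspan_ne : (ℝ ∙ g p : Submodule ℝ V3) ≠ ℝ ∙ g q := by
      intro h
      exact hpq (Projectivization.submodule_injective (by rw [hgspan p hp, hgspan q hq, h]))
    have hinf : (ℝ ∙ g p : Submodule ℝ V3) ⊓ (ℝ ∙ g q) = ⊥ := by
      rw [Submodule.eq_bot_iff]
      intro x hx
      obtain ⟨hx1, hx2⟩ := Submodule.mem_inf.mp hx
      obtain ⟨cp, rfl⟩ := Submodule.mem_span_singleton.mp hx1
      obtain ⟨cq, hcq⟩ := Submodule.mem_span_singleton.mp hx2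
      by_cases hcp : cp = 0
      · rw [hcp, zero_smul]
      · exfalso
        apply hspan_ne
        have hgp : g p = (cp⁻¹ * cq) • g q := by
          rw [mul_smul, hcq, smul_smul, inv_mul_cancel₀ hcp, one_smul]
        have hcc : (cp⁻¹ * cq) ≠ 0 := by
          intro h
          exact hg0 p hp (by rw [hgp, h, zero_smul])
        rw [hgp]
        exact Submodule.span_singleton_smul_eq (isUnit_iff_ne_zero.mpr hcc) _
    rw [hsp]
    have hkey := Submodule.finrank_sup_add_finrank_inf_eq (ℝ ∙ g p) (ℝ ∙ g q)
    rw [hinf, finrank_bot, finrank_span_singleton (hg0 p hp),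
      finrank_span_singleton (hg0 q hq)] at hkey
    omega
  have hmem_iff : ∀ r ∈ s, ∀ p ∈ s, ∀ q ∈ s,
      (Projectivization.submodule r ≤ Submodule.span ℝ {g p, g q} ↔
        g r ∈ Submodule.span ℝ ({g p, g q} : Set V3)) := by
    intro r hr p _ q _
    rw [hgspan r hr, Submodule.span_singleton_le_iff_mem]
  -- a noncollinear triple
  have h2 : 1 < s.card := by omega
  obtain ⟨p0, hp0, q0, hq0, hpq0⟩ := Finset.one_lt_card.mp h2
  push_neg at hnc
  obtain ⟨r0, hr0, hr0n⟩ := hnc (Submodule.span ℝ {g p0, g q0}) (hrank p0 hp0 q0 hq0 hpq0)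
  have hyz : g p0 ≠ g q0 := fun h => hpq0 (hgne p0 hp0 q0 hq0 h)
  have hncol : ¬ ∃ t : ℝ, g r0 = g p0 + t • (g q0 - g p0) := by
    rintro ⟨t, ht⟩
    apply hr0n
    rw [hmem_iff r0 hr0 p0 hp0 q0 hq0]
    exact Submodule.mem_span_pair.mpr ⟨1 - t, t, by linear_combination (norm := module) ht.symm⟩
  obtain ⟨p', hp'T, q', hq'T, hne', hord⟩ := core (s.image g) (g r0) (g p0) (g q0)
    (Finset.mem_image_of_mem g hr0) (Finset.mem_image_of_mem g hp0)
    (Finset.mem_image_of_mem g hq0) hyz hncol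
  obtain ⟨p, hp, rfl⟩ := Finset.mem_image.mp hp'T
  obtain ⟨q, hq, rfl⟩ := Finset.mem_image.mp hq'T
  have hpq : p ≠ q := fun h => hne' (by rw [h])
  refine ⟨Submodule.span ℝ {g p, g q}, hrank p hp q hq hpq, p, hp, q, hq, hpq, ?_, ?_, ?_⟩
  · rw [hgspan p hp, Submodule.span_singleton_le_iff_mem]
    exact Submodule.subset_span (by simp)
  · rw [hgspan q hq, Submodule.span_singleton_le_iff_mem]
    exact Submodule.subset_span (by simp)
  · intro r hr hrW
    have hgr := (hmem_iff r hr p hp q hq).mp hrW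
    obtain ⟨av, bv, hab⟩ := Submodule.mem_span_pair.mp hgr
    have hsum : av + bv = 1 := by
      have := congrArg (fun v => e ⬝ᵥ v) hab
      simpa [dotProduct_add, dotProduct_smul, smul_eq_mul,
        hge p hp, hge q hq, hge r hr] using this
    have hline : g r = g p + bv • (g q - g p) := by
      have hav : av = 1 - bv := eq_sub_of_add_eq hsum
      rw [← hab, hav]; module
    rcases hord (g r) (Finset.mem_image_of_mem g hr) with h | h | h
    · exact absurd hline (h bv)
    · exact Or.inl (hgne r hr p hp h)
    · exact Or.inr (hgne r hr q hq h)
end
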